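/- Let k be a field, n ≥ 3, and let t = 2m+1 be odd with m ∈ ℕ. Then K_n^(t) = ⋂_{1≤i<j≤n} ⟨x_i, x_j⟩^t equals the ideal of k[x_1,…,x_n] generated by the monomials x_j^{m-k} ∏_{i≠j} x_i^{m+1+k} for 0 ≤ k ≤ m and 1 ≤ j ≤ n. -/

import Mathlib

open MvPolynomial

section Aux

variable {σ R : Type*} [CommSemiring R]

private lemma aux_prod_X_pow (s : Finset σ) (f : σ → ℕ) :
    (∏ i ∈ s, (X i : MvPolynomial σ R) ^ f i) =
      monomial (∑ i ∈ s, Finsupp.single i (f i)) (1 : R) := by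
  classical
  induction s using Finset.induction with
  | empty => simp
  | insert _ _ h ih =>
      rw [Finset.prod_insert h, Finset.sum_insert h, ih, X_pow_eq_monomial, monomial_mul, one_mul]

private lemma aux_mem_pow (i j : σ) (t p q : ℕ) (h : t ≤ p + q) (r : MvPolynomial σ R) :
    r * ((X i : MvPolynomial σ R) ^ p * X j ^ q) ∈ (Ideal.span {X i, X j}) ^ t := by
  apply Ideal.mul_mem_left
  refine Ideal.pow_le_pow_right h ?_
  rw [pow_add]
  exact Ideal.mul_mem_mul
    (Ideal.pow_mem_pow (Ideal.subset_span (by simp)) p)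
    (Ideal.pow_mem_pow (Ideal.subset_span (by simp)) q)

private lemma aux_pow_le (i j : σ) (t : ℕ) :
    (Ideal.span {X i, X j} : Ideal (MvPolynomial σ R)) ^ t ≤
      Ideal.span ((fun s => monomial s (1 : R)) '' {d | t ≤ d i + d j}) := by
  classical
  induction t with
  | zero =>
      rw [pow_zero, Ideal.one_eq_top]
      have h1 : (1 : MvPolynomial σ R) ∈
          Ideal.span ((fun s => monomial s (1 : R)) '' {d | 0 ≤ d i + d j}) :=
        Ideal.subset_span ⟨0, by simp, by simp⟩
      exact le_of_eq ((Ideal.eq_top_iff_one _).mpr h1).symm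
  | succ t ih =>
      rw [pow_succ]
      have base : (Ideal.span {X i, X j} : Ideal (MvPolynomial σ R)) ≤
          Ideal.span ((fun s => monomial s (1 : R)) '' {d | 1 ≤ d i + d j}) := by
        rw [Ideal.span_le]
        rintro x (rfl | rfl)
        · refine Ideal.subset_span ⟨Finsupp.single i 1, by simp, ?_⟩
          show monomial (Finsupp.single i 1) (1 : R) = X i
          rw [← X_pow_eq_monomial, pow_one]
        · refine Ideal.subset_span ⟨Finsupp.single j 1, by simp [Finsupp.single_apply], ?_⟩
          show monomial (Finsupp.single j 1) (1 : R) = X j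
          rw [← X_pow_eq_monomial, pow_one]
      refine le_trans (Ideal.mul_mono ih base) ?_
      rw [Ideal.mul_le]
      intro a ha b hb
      rw [mem_ideal_span_monomial_image] at ha hb ⊢
      intro d hd
      obtain ⟨da, hda, db, hdb, rfl⟩ := Finset.mem_add.mp (support_mul a b hd)
      obtain ⟨sa, hsa, hsa'⟩ := ha da hda
      obtain ⟨sb, hsb, hsb'⟩ := hb db hdb
      refine ⟨sa + sb, ?_, add_le_add hsa' hsb'⟩
      simp only [Set.mem_setOf_eq, Finsupp.add_apply] at hsa hsb ⊢
      omega

end Aux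

/-- For `n ≥ 3` and odd `t = 2m+1`, the ideal
`K_n^(t) = ⋂_{i<j} ⟨x_i, x_j⟩^t` of `k[x_1,…,x_n]` equals the ideal generated by the
monomials `x_j^{m-k} ∏_{i≠j} x_i^{m+1+k}` for `0 ≤ k ≤ m` and `j ∈ {1,…,n}`. -/
theorem complete_graph_odd_power_generators (k : Type*) [Field k] (n m : ℕ) (hn : 3 ≤ n) :
    (⨅ (i : Fin n) (j : Fin n) (_ : i < j),
        (Ideal.span {X i, X j} : Ideal (MvPolynomial (Fin n) k)) ^ (2 * m + 1)) =
    Ideal.span {f : MvPolynomial (Fin n) k |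
      ∃ (c : ℕ) (j : Fin n), c ≤ m ∧
        f = X j ^ (m - c) * ∏ i ∈ Finset.univ.erase j, X i ^ (m + 1 + c)} := by
  classical
  have npos : 0 < n := by omega
  set D : ℕ → Fin n → (Fin n →₀ ℕ) := fun c j =>
    Finsupp.single j (m - c) + ∑ i ∈ Finset.univ.erase j, Finsupp.single i (m + 1 + c) with hD
  have hDj : ∀ c j, D c j j = m - c := by
    intro c j
    simp only [hD, Finsupp.add_apply, Finsupp.single_eq_same, Finset.sum_apply']
    rw [Finset.sum_eq_zero, add_zero]
    intro i hi
    exact Finsupp.single_eq_of_ne' (Finset.mem_erase.mp hi).1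
  have hDl : ∀ c j l, l ≠ j → D c j l = m + 1 + c := by
    intro c j l hl
    simp only [hD, Finsupp.add_apply, Finset.sum_apply']
    rw [Finsupp.single_eq_of_ne' (fun h => hl h.symm), zero_add, Finset.sum_eq_single l]
    · exact Finsupp.single_eq_same
    · intro i _ hil
      exact Finsupp.single_eq_of_ne' hil
    · intro h
      exact absurd (Finset.mem_erase.mpr ⟨hl, Finset.mem_univ l⟩) h
  have hgen : ∀ c (j : Fin n),
      (X j ^ (m - c) * ∏ i ∈ Finset.univ.erase j, X i ^ (m + 1 + c) : MvPolynomial (Fin n) k)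
        = monomial (D c j) 1 := by
    intro c j
    rw [aux_prod_X_pow, X_pow_eq_monomial, monomial_mul, one_mul]
  have hset : {f : MvPolynomial (Fin n) k |
      ∃ (c : ℕ) (j : Fin n), c ≤ m ∧
        f = X j ^ (m - c) * ∏ i ∈ Finset.univ.erase j, X i ^ (m + 1 + c)} =
      (fun s => monomial s (1 : k)) '' {d | ∃ (c : ℕ) (j : Fin n), c ≤ m ∧ d = D c j} := by
    ext f
    constructor
    · rintro ⟨c, j, hc, rfl⟩
      exact ⟨D c j, ⟨c, j, hc, rfl⟩, (hgen c j).symm⟩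
    · rintro ⟨d, ⟨c, j, hc, rfl⟩, rfl⟩
      exact ⟨c, j, hc, (hgen c j).symm⟩
  refine le_antisymm ?_ ?_
  · -- hard direction
    intro f hf
    have hf' : ∀ i j : Fin n, i < j →
        f ∈ (Ideal.span {X i, X j} : Ideal (MvPolynomial (Fin n) k)) ^ (2 * m + 1) := by
      simpa [Submodule.mem_iInf] using hf
    have Hpair : ∀ d ∈ f.support, ∀ i j : Fin n, i ≠ j → 2 * m + 1 ≤ d i + d j := by
      intro d hd i j hij
      rcases hij.lt_or_gt with h | h
      · obtain ⟨s, hs, hsd⟩ :=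
          (mem_ideal_span_monomial_image.mp (aux_pow_le i j (2 * m + 1) (hf' i j h))) d hd
        have h1 := Finsupp.le_def.mp hsd i
        have h2 := Finsupp.le_def.mp hsd j
        simp only [Set.mem_setOf_eq] at hs
        omega
      · obtain ⟨s, hs, hsd⟩ :=
          (mem_ideal_span_monomial_image.mp (aux_pow_le j i (2 * m + 1) (hf' j i h))) d hd
        have h1 := Finsupp.le_def.mp hsd i
        have h2 := Finsupp.le_def.mp hsd j
        simp only [Set.mem_setOf_eq] at hs
        omega
    rw [hset, mem_ideal_span_monomial_image]
    intro d hd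
    obtain ⟨j0, -, hj0⟩ := Finset.exists_min_image Finset.univ d
      ⟨⟨0, npos⟩, Finset.mem_univ _⟩
    by_cases hcase : d j0 ≤ m
    · refine ⟨D (m - d j0) j0, ⟨m - d j0, j0, Nat.sub_le _ _, rfl⟩, ?_⟩
      rw [Finsupp.le_def]
      intro l
      by_cases hl : l = j0
      · subst hl; rw [hDj]; omega
      · rw [hDl _ _ _ hl]
        have := Hpair d hd l j0 hl
        omega
    · refine ⟨D 0 j0, ⟨0, j0, Nat.zero_le _, rfl⟩, ?_⟩
      rw [Finsupp.le_def]
      intro l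
      by_cases hl : l = j0
      · subst hl; rw [hDj]; omega
      · rw [hDl _ _ _ hl]
        have := hj0 l (Finset.mem_univ l)
        omega
  · -- easy direction
    rw [Ideal.span_le]
    rintro g ⟨c, j0, hc, rfl⟩
    simp only [SetLike.mem_coe, Submodule.mem_iInf]
    intro a b hab
    by_cases ha : j0 = a
    · subst ha
      have hb : b ∈ Finset.univ.erase j0 :=
        Finset.mem_erase.mpr ⟨hab.ne', Finset.mem_univ b⟩
      rw [← Finset.mul_prod_erase _ _ hb]
      have : (X j0 ^ (m - c) * (X b ^ (m + 1 + c) *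
            ∏ i ∈ (Finset.univ.erase j0).erase b, X i ^ (m + 1 + c)) : MvPolynomial (Fin n) k)
          = (∏ i ∈ (Finset.univ.erase j0).erase b, X i ^ (m + 1 + c)) *
            (X j0 ^ (m - c) * X b ^ (m + 1 + c)) := by ring
      rw [this]
      exact aux_mem_pow _ _ _ _ _ (by omega) _
    · by_cases hb : j0 = b
      · subst hb
        have ha' : a ∈ Finset.univ.erase j0 :=
          Finset.mem_erase.mpr ⟨hab.ne, Finset.mem_univ a⟩
        rw [← Finset.mul_prod_erase _ _ ha']
        have : (X j0 ^ (m - c) * (X a ^ (m + 1 + c) *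
              ∏ i ∈ (Finset.univ.erase j0).erase a, X i ^ (m + 1 + c)) : MvPolynomial (Fin n) k)
            = (∏ i ∈ (Finset.univ.erase j0).erase a, X i ^ (m + 1 + c)) *
              (X a ^ (m + 1 + c) * X j0 ^ (m - c)) := by ring
        rw [this]
        exact aux_mem_pow _ _ _ _ _ (by omega) _
      · have ha' : a ∈ Finset.univ.erase j0 :=
          Finset.mem_erase.mpr ⟨fun h => ha h.symm, Finset.mem_univ a⟩
        have hb' : b ∈ (Finset.univ.erase j0).erase a :=
          Finset.mem_erase.mpr ⟨hab.ne',
            Finset.mem_erase.mpr ⟨fun h => hb h.symm, Finset.mem_univ b⟩⟩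
        rw [← Finset.mul_prod_erase _ _ ha', ← Finset.mul_prod_erase _ _ hb']
        have : (X j0 ^ (m - c) * (X a ^ (m + 1 + c) * (X b ^ (m + 1 + c) *
              ∏ i ∈ ((Finset.univ.erase j0).erase a).erase b, X i ^ (m + 1 + c)))
              : MvPolynomial (Fin n) k)
            = (X j0 ^ (m - c) *
                ∏ i ∈ ((Finset.univ.erase j0).erase a).erase b, X i ^ (m + 1 + c)) *
              (X a ^ (m + 1 + c) * X b ^ (m + 1 + c)) := by ring
        rw [this]
        exact aux_mem_pow _ _ _ _ _ (by omega) _
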